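/- Addition of extensional fuzzy numbers built from the asymmetric relation S_q agrees with the Zadeh sup–T extension: for all reals x, y, z and all parameters l_x, r_x, l_y, r_y > 0, the supremum over a ∈ ℝ of max(0, S_q(l_x,r_x)(x,a) + S_q(l_y,r_y)(y, z − a) − 1) equals S_q(max(l_x,l_y), max(r_x,r_y))(x + y, z). -/
import Mathlib


/-- The asymmetric relation `S_q(l,r)`. -/
noncomputable def Sq (l r x y : ℝ) : ℝ :=
  if x > y then max (1 - |x - y| / l) 0 else max (1 - |x - y| / r) 0

/-- The Łukasiewicz t-norm `T(a,b) = max(0, a + b - 1)`. -/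
noncomputable def luk (a b : ℝ) : ℝ := max 0 (a + b - 1)

lemma Sq_eq (l r X Y : ℝ) :
    Sq l r X Y = if 0 < X - Y then max (1 - (X - Y) / l) 0 else max (1 - (Y - X) / r) 0 := by
  unfold Sq
  rcases lt_or_ge Y X with h | h
  · rw [if_pos h, if_pos (sub_pos.2 h), abs_of_pos (sub_pos.2 h)]
  · rw [if_neg (not_lt.2 h), if_neg (not_lt.2 (sub_nonpos.2 h)),
      abs_of_nonpos (sub_nonpos.2 h), neg_sub]

lemma tri (a b c : ℝ) (ha : 0 ≤ a) (hb : 0 ≤ b) (h : c ≤ a + b) :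
    max (1 - a) 0 + max (1 - b) 0 - 1 ≤ max (1 - c) 0 := by
  have h0 : (0:ℝ) ≤ max (1 - c) 0 := le_max_right _ _
  have h0' : 1 - c ≤ max (1 - c) 0 := le_max_left _ _
  rcases max_cases (1 - a) 0 with ⟨ha1, _⟩ | ⟨ha1, _⟩ <;>
    rcases max_cases (1 - b) 0 with ⟨hb1, _⟩ | ⟨hb1, _⟩ <;> rw [ha1, hb1] <;> linarith

lemma dsum (p q lp lq L : ℝ) (hp : 0 ≤ p) (hq : 0 ≤ q) (hlp : 0 < lp) (hlq : 0 < lq)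
    (h1 : lp ≤ L) (h2 : lq ≤ L) : (p + q) / L ≤ p / lp + q / lq := by
  have hL : 0 < L := hlp.trans_le h1
  rw [add_div]
  gcongr

lemma done' (p p' lp L : ℝ) (hp : 0 ≤ p) (hpp : p ≤ p') (hlp : 0 < lp) (h1 : lp ≤ L) :
    p / L ≤ p' / lp := by
  have hL : 0 < L := hlp.trans_le h1
  have hp' : 0 ≤ p' := hp.trans hpp
  gcongr

lemma key (x y z lx rx ly ry : ℝ)
    (hlx : 0 < lx) (hrx : 0 < rx) (hly : 0 < ly) (hry : 0 < ry) (a : ℝ) :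
    luk (Sq lx rx x a) (Sq ly ry y (z - a)) ≤ Sq (max lx ly) (max rx ry) (x + y) z := by
  rw [Sq_eq, Sq_eq, Sq_eq, luk]
  split_ifs with h1 h2 h3 h3 h2 h3 h3 <;>
    refine max_le (le_max_right _ _)
      (tri _ _ _ (div_nonneg (by linarith) (by positivity))
        (div_nonneg (by linarith) (by positivity)) ?_) <;>
  first
  | (exfalso; linarith)
  | (rw [show x + y - z = (x - a) + (y - (z - a)) from by ring]
     exact dsum _ _ _ _ _ (by linarith) (by linarith) hlx hly (le_max_left _ _) (le_max_right _ _))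
  | (rw [show z - (x + y) = (a - x) + (z - a - y) from by ring]
     exact dsum _ _ _ _ _ (by linarith) (by linarith) hrx hry (le_max_left _ _) (le_max_right _ _))
  | (have hb : 0 ≤ (z - a - y) / ry := div_nonneg (by linarith) hry.le
     have hc : (x + y - z) / max lx ly ≤ (x - a) / lx :=
       done' _ _ _ _ (by linarith) (by linarith) hlx (le_max_left _ _)
     linarith)
  | (have ha' : 0 ≤ (a - x) / rx := div_nonneg (by linarith) hrx.le
     have hc : (x + y - z) / max lx ly ≤ (y - (z - a)) / ly :=
       done' _ _ _ _ (by linarith) (by linarith) hly (le_max_right _ _)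
     linarith)
  | (have ha' : 0 ≤ (x - a) / lx := div_nonneg (by linarith) hlx.le
     have hc : (z - (x + y)) / max rx ry ≤ (z - a - y) / ry :=
       done' _ _ _ _ (by linarith) (by linarith) hry (le_max_right _ _)
     linarith)
  | (have hb' : 0 ≤ (y - (z - a)) / ly := div_nonneg (by linarith) hly.le
     have hc : (z - (x + y)) / max rx ry ≤ (a - x) / rx :=
       done' _ _ _ _ (by linarith) (by linarith) hrx (le_max_left _ _)
     linarith)

lemma Sq_self (l r w : ℝ) (hr : 0 < r) : Sq l r w w = 1 := by
  rw [Sq_eq]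
  simp

lemma luk_one_right (s : ℝ) (hs : 0 ≤ s) : luk s 1 = s := by
  rw [luk]; rw [max_eq_right (by linarith)]; ring_nf

lemma luk_one_left (s : ℝ) (hs : 0 ≤ s) : luk 1 s = s := by
  rw [luk]; rw [max_eq_right (by linarith)]; ring_nf

lemma exists_a (x y z lx rx ly ry : ℝ)
    (hlx : 0 < lx) (hrx : 0 < rx) (hly : 0 < ly) (hry : 0 < ry) :
    ∃ a : ℝ, luk (Sq lx rx x a) (Sq ly ry y (z - a))
      = Sq (max lx ly) (max rx ry) (x + y) z := by
  by_cases hD : 0 < x + y - z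
  · rcases le_total ly lx with hl | hl
    · refine ⟨z - y, ?_⟩
      have e1 : z - (z - y) = y := by ring
      rw [e1, Sq_self _ _ _ hry, luk_one_right _ (by rw [Sq_eq]; split_ifs <;> exact le_max_right _ _)]
      rw [Sq_eq, Sq_eq, if_pos (by linarith : (0:ℝ) < x - (z - y)),
        if_pos (by linarith : (0:ℝ) < x + y - z), max_eq_left hl]
      ring_nf
    · refine ⟨x, ?_⟩
      rw [Sq_self _ _ _ hrx, luk_one_left _ (by rw [Sq_eq]; split_ifs <;> exact le_max_right _ _)]
      rw [Sq_eq, Sq_eq, if_pos (by linarith : (0:ℝ) < y - (z - x)),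
        if_pos (by linarith : (0:ℝ) < x + y - z), max_eq_right hl]
      ring_nf
  · rcases le_total ry rx with hr | hr
    · refine ⟨z - y, ?_⟩
      have e1 : z - (z - y) = y := by ring
      rw [e1, Sq_self _ _ _ hry, luk_one_right _ (by rw [Sq_eq]; split_ifs <;> exact le_max_right _ _)]
      rw [Sq_eq, Sq_eq, if_neg (by intro h; exact hD (by linarith)),
        if_neg (by intro h; exact hD (by linarith)), max_eq_left hr]
      ring_nf
    · refine ⟨x, ?_⟩
      rw [Sq_self _ _ _ hrx, luk_one_left _ (by rw [Sq_eq]; split_ifs <;> exact le_max_right _ _)]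
      rw [Sq_eq, Sq_eq, if_neg (by intro h; exact hD (by linarith)),
        if_neg (by intro h; exact hD (by linarith)), max_eq_right hr]
      ring_nf

theorem Sq_addition (x y z lx rx ly ry : ℝ)
    (hlx : 0 < lx) (hrx : 0 < rx) (hly : 0 < ly) (hry : 0 < ry) :
    (⨆ a : ℝ, luk (Sq lx rx x a) (Sq ly ry y (z - a)))
      = Sq (max lx ly) (max rx ry) (x + y) z := by
  have hbdd : BddAbove (Set.range fun a => luk (Sq lx rx x a) (Sq ly ry y (z - a))) := by
    refine ⟨Sq (max lx ly) (max rx ry) (x + y) z, ?_⟩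
    rintro _ ⟨a, rfl⟩
    exact key x y z lx rx ly ry hlx hrx hly hry a
  obtain ⟨a₀, ha₀⟩ := exists_a x y z lx rx ly ry hlx hrx hly hry
  refine le_antisymm (ciSup_le fun a => key x y z lx rx ly ry hlx hrx hly hry a) ?_
  rw [← ha₀]
  exact le_ciSup hbdd a₀
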